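/- All zeros of $A_n^\gamma(z)=\sum_{k=1}^n\gamma_k g_k(z)$ lie in the disk $\left|z-\frac{\sum_{j=1}^n(1-\gamma_j)z_j}{n-1}\right|\le \sqrt{\frac{n-2}{n-1}}\left(\sum_{j=1}^{n-1}|(1-\gamma_j)z_j+\gamma_j z_n|^2+(n-2)\sum_{j=1}^{n-1}\gamma_j^2|z_n-z_j|^2-\frac{|\sum_{j=1}^n(1-\gamma_j)z_j|^2}{n-1}\right)^{1/2}$. -/

import Mathlib

open Polynomial Finset Matrix Complex

lemma cs_abs {ι : Type*} (s : Finset ι) (f g : ι → ℂ) :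
    ‖∑ i ∈ s, f i * g i‖ ^ 2
      ≤ (∑ i ∈ s, ‖f i‖ ^ 2) * (∑ i ∈ s, ‖g i‖ ^ 2) := by
  have h1 : ‖∑ i ∈ s, f i * g i‖
      ≤ ∑ i ∈ s, ‖f i‖ * ‖g i‖ := by
    refine (norm_sum_le s fun i => f i * g i).trans (le_of_eq ?_)
    simp [_root_.map_mul]
  calc ‖∑ i ∈ s, f i * g i‖ ^ 2
      ≤ (∑ i ∈ s, ‖f i‖ * ‖g i‖) ^ 2 :=
        pow_le_pow_left₀ (norm_nonneg _) h1 2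
    _ ≤ _ := by
        simpa [mul_pow] using
          Finset.sum_mul_sq_le_sq_mul_sq s (fun i => ‖f i‖) (fun i => ‖g i‖)

lemma eval_charpoly' {m : ℕ} (M : Matrix (Fin m) (Fin m) ℂ) (x : ℂ) :
    (M.charpoly).eval x = (Matrix.of fun i j => (if i = j then x else 0) - M i j).det := by
  rw [Matrix.charpoly, ← Polynomial.coe_evalRingHom, RingHom.map_det]
  congr 1
  ext i j
  by_cases h : i = j <;> simp [charmatrix_apply, h, Matrix.diagonal, Matrix.one_apply]

lemma prod_erase_fin {M : Type*} [CommMonoid M] {m : ℕ} (k : Fin m) (f : ℕ → M) :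
    ∏ j ∈ (univ : Finset (Fin m)).erase k, f (j : ℕ)
      = ∏ j ∈ (Finset.range m).erase (k : ℕ), f j := by
  have h1 : ∏ j ∈ (univ : Finset (Fin m)).erase k, f (j : ℕ)
      = ∏ j ∈ (univ : Finset (Fin m)).erase k,
          (if (j : ℕ) = (k : ℕ) then 1 else f (j : ℕ)) :=
    Finset.prod_congr rfl fun j hj =>
      (if_neg (fun h => (Finset.mem_erase.mp hj).1 (Fin.val_injective h))).symm
  have h2 : ∏ j ∈ (Finset.range m).erase (k : ℕ), f j
      = ∏ j ∈ (Finset.range m).erase (k : ℕ), (if j = (k : ℕ) then 1 else f j) :=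
    Finset.prod_congr rfl fun j hj => (if_neg (Finset.mem_erase.mp hj).1).symm
  rw [h1, h2, Finset.prod_erase _ (by simp), Finset.prod_erase _ (by simp)]
  exact Fin.prod_univ_eq_prod_range (fun j => if j = (k : ℕ) then 1 else f j) m

lemma det_rank_one {m : ℕ} (d u : Fin m → ℂ) (x : ℂ) (hx : ∀ k, x ≠ d k) :
    (Matrix.of fun i j : Fin m =>
        (if i = j then x else 0) - ((if i = j then d i else 0) + u i)).det
    = (∏ k, (x - d k)) - ∑ k, u k * ∏ j ∈ univ.erase k, (x - d j) := by
  classical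
  have hM : (Matrix.of fun i j : Fin m =>
        (if i = j then x else 0) - ((if i = j then d i else 0) + u i))
      = Matrix.diagonal (fun k => x - d k)
        + Matrix.replicateCol Unit (fun k => -u k) * Matrix.replicateRow Unit (fun _ => (1:ℂ)) := by
    ext i j
    by_cases h : i = j <;>
      simp [h, Matrix.diagonal, Matrix.mul_apply, Matrix.replicateCol, Matrix.replicateRow] <;> ring
  rw [hM, Matrix.det_add_replicateCol_mul_replicateRow (by
    rw [Matrix.det_diagonal]
    exact (Finset.prod_ne_zero_iff.mpr fun k _ => sub_ne_zero.mpr (hx k)).isUnit)]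
  have hinv : (Matrix.diagonal fun k => x - d k)⁻¹ = Matrix.diagonal fun k => (x - d k)⁻¹ :=
    Matrix.inv_eq_right_inv (by
      rw [Matrix.diagonal_mul_diagonal]
      convert Matrix.diagonal_one with k
      exact mul_inv_cancel₀ (sub_ne_zero.mpr (hx k)))
  rw [Matrix.det_diagonal, hinv, Matrix.det_unique]
  simp only [Matrix.add_apply, Matrix.one_apply_eq, Matrix.mul_apply, Matrix.replicateRow_apply,
    Matrix.replicateCol_apply, Matrix.diagonal_apply, Ring.inverse_eq_inv', Finset.univ_unique,
    Finset.sum_singleton, one_mul, Finset.sum_ite_eq, Finset.sum_ite_eq', Finset.mem_univ, if_true]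
  rw [mul_add, mul_one, Finset.mul_sum]
  rw [sub_eq_add_neg, ← Finset.sum_neg_distrib]
  congr 1
  refine Finset.sum_congr rfl fun k _ => ?_
  rw [← Finset.mul_prod_erase univ _ (Finset.mem_univ k)]
  field_simp [sub_ne_zero.mpr (hx k)]

lemma charpoly_rank_one {m : ℕ} (d u : Fin m → ℂ) :
    (Matrix.of fun i j : Fin m => (if i = j then d i else 0) + u i).charpoly
      = ∏ k, (X - Polynomial.C (d k))
        - ∑ k, Polynomial.C (u k) * ∏ j ∈ univ.erase k, (X - Polynomial.C (d j)) := by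
  have key : ∀ x : ℂ, (∀ k, x ≠ d k) →
      ((Matrix.of fun i j : Fin m => (if i = j then d i else 0) + u i).charpoly
        - (∏ k, (X - Polynomial.C (d k))
          - ∑ k, Polynomial.C (u k) * ∏ j ∈ univ.erase k, (X - Polynomial.C (d j)))).eval x
        = 0 := by
    intro x hx
    rw [eval_sub, eval_charpoly']
    simp only [Matrix.of_apply]
    rw [show (Matrix.of fun i j : Fin m =>
        (if i = j then x else 0) - ((if i = j then d i else 0) + u i)).det
      = (∏ k, (x - d k)) - ∑ k, u k * ∏ j ∈ univ.erase k, (x - d j) from det_rank_one d u x hx]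
    simp only [eval_sub, eval_prod, eval_finset_sum, eval_mul, eval_X, eval_C, Matrix.of_apply]
    ring
  refine sub_eq_zero.mp (Polynomial.eq_zero_of_infinite_isRoot _
    (Set.Infinite.mono ?_ ((Set.finite_range d).infinite_compl)))
  intro x hx
  exact key x fun k h => hx (Set.mem_range.mpr ⟨k, h.symm⟩)

lemma trace_zero_bound {m : ℕ} (hm : 1 ≤ m) (B : Matrix (Fin m) (Fin m) ℂ) (v : Fin m → ℂ)
    (hv : ∑ i, Complex.normSq (v i) = 1)
    (htr : ∑ i, B i i = 0) :
    Complex.normSq (∑ j, (∑ k, (starRingEnd ℂ) (v k) * B k j) * v j) * m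
      ≤ ((m : ℝ) - 1) * ∑ i, ∑ j, Complex.normSq (B i j) := by
  classical
  set s : Fin m → ℂ := fun j => ∑ k, (starRingEnd ℂ) (v k) * B k j with hs
  set μ : ℂ := ∑ j, s j * v j with hμ
  set Cm : Fin m → Fin m → ℂ := fun i j => B i j - v i * s j with hCm
  -- ∑ conj v * v = 1
  have hvc : (∑ k, (starRingEnd ℂ) (v k) * v k) = 1 := by
    have h1 : ∀ k, (starRingEnd ℂ) (v k) * v k = ((Complex.normSq (v k) : ℝ) : ℂ) := fun k => by
      rw [mul_comm, Complex.mul_conj]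
    rw [Finset.sum_congr rfl fun k _ => h1 k, ← Complex.ofReal_sum, hv, Complex.ofReal_one]
  -- projection kills Cm
  have hPC : ∀ j, ∑ k, (starRingEnd ℂ) (v k) * Cm k j = 0 := by
    intro j
    simp only [hCm, mul_sub]
    rw [Finset.sum_sub_distrib]
    have h2 : ∑ k, (starRingEnd ℂ) (v k) * (v k * s j)
        = (∑ k, (starRingEnd ℂ) (v k) * v k) * s j := by
      rw [Finset.sum_mul]; exact Finset.sum_congr rfl fun k _ => by ring
    rw [h2, hvc, one_mul, sub_self]
  -- trace of Cm
  have htrC : ∑ i, Cm i i = -μ := by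
    simp only [hCm]
    rw [Finset.sum_sub_distrib, htr, zero_sub, hμ]
    congr 1
    exact Finset.sum_congr rfl fun i _ => by ring
  -- Frobenius decomposition
  have hcross : ∑ i, ∑ j, (Cm i j * (starRingEnd ℂ) (v i * s j)).re = 0 := by
    rw [Finset.sum_comm]
    refine Finset.sum_eq_zero fun j _ => ?_
    have h0 : ∑ i, Cm i j * (starRingEnd ℂ) (v i * s j) = 0 := by
      have h1 : ∀ i, Cm i j * (starRingEnd ℂ) (v i * s j)
          = (starRingEnd ℂ) (s j) * ((starRingEnd ℂ) (v i) * Cm i j) := fun i => by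
        rw [RingHom.map_mul]; ring
      rw [Finset.sum_congr rfl fun i _ => h1 i, ← Finset.mul_sum, hPC j, mul_zero]
    rw [← Complex.re_sum, h0, Complex.zero_re]
  have hF2 : ∑ i, ∑ j, Complex.normSq (B i j)
      = (∑ i, ∑ j, Complex.normSq (Cm i j)) + ∑ j, Complex.normSq (s j) := by
    have hexp : ∀ i j, Complex.normSq (B i j)
        = Complex.normSq (Cm i j) + Complex.normSq (v i) * Complex.normSq (s j)
          + 2 * (Cm i j * (starRingEnd ℂ) (v i * s j)).re := by
      intro i j
      have hB : B i j = Cm i j + v i * s j := by simp [hCm]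
      rw [hB, Complex.normSq_add, Complex.normSq_mul]
    calc ∑ i, ∑ j, Complex.normSq (B i j)
        = (∑ i, ∑ j, Complex.normSq (Cm i j))
          + ((∑ i, ∑ j, Complex.normSq (v i) * Complex.normSq (s j))
            + 2 * ∑ i, ∑ j, (Cm i j * (starRingEnd ℂ) (v i * s j)).re) := by
          simp_rw [hexp, Finset.sum_add_distrib, Finset.mul_sum]
          ring
      _ = (∑ i, ∑ j, Complex.normSq (Cm i j)) + ∑ j, Complex.normSq (s j) := by
          rw [hcross, mul_zero, add_zero]
          congr 1
          simp_rw [← Finset.mul_sum]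
          rw [← Finset.sum_mul, hv, one_mul]
  -- Cauchy-Schwarz for the trace of Cm
  have htrb : Complex.normSq (∑ i, Cm i i)
      ≤ ((m : ℝ) - 1) * ∑ i, ∑ j, Complex.normSq (Cm i j) := by
    set q : Fin m → Fin m → ℂ :=
      fun i k => (if i = k then (1:ℂ) else 0) - v i * (starRingEnd ℂ) (v k) with hq
    have hrep : ∑ i, Cm i i = ∑ i, ∑ k, q i k * Cm k i := by
      have h1 : ∀ i, ∑ k, q i k * Cm k i
          = Cm i i - v i * ∑ k, (starRingEnd ℂ) (v k) * Cm k i := by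
        intro i
        simp only [hq, sub_mul, ite_mul, one_mul, zero_mul]
        rw [Finset.sum_sub_distrib, Finset.sum_ite_eq, if_pos (Finset.mem_univ i)]
        congr 1
        rw [Finset.mul_sum]
        exact Finset.sum_congr rfl fun k _ => by ring
      rw [Finset.sum_congr rfl fun i _ => h1 i]
      simp [hPC]
    have hqnorm : ∑ i, ∑ k, Complex.normSq (q i k) = (m : ℝ) - 1 := by
      have h1 : ∀ i k, Complex.normSq (q i k)
          = (if i = k then (1:ℝ) else 0) + Complex.normSq (v i) * Complex.normSq (v k)
            - 2 * (if i = k then Complex.normSq (v i) else 0) := by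
        intro i k
        by_cases h : i = k
        · subst h
          have e : q i i = ((1 - Complex.normSq (v i) : ℝ) : ℂ) := by
            simp only [hq, if_pos rfl]
            rw [Complex.mul_conj]
            push_cast
            ring
          rw [e, Complex.normSq_ofReal, if_pos rfl, if_pos rfl]
          ring
        · simp only [hq, if_neg h]
          rw [zero_sub, Complex.normSq_neg, Complex.normSq_mul, Complex.normSq_conj]
          ring
      simp_rw [h1, Finset.sum_sub_distrib, Finset.sum_add_distrib]
      have e1 : ∑ x : Fin m, ∑ y : Fin m, (if x = y then (1:ℝ) else 0) = m := by
        simp [Finset.sum_ite_eq]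
      have h2 : ∑ i : Fin m, ∑ k : Fin m, Complex.normSq (v i) * Complex.normSq (v k) = 1 := by
        simp_rw [← Finset.mul_sum]
        rw [← Finset.sum_mul, hv]
        norm_num
      have h3 : ∑ i : Fin m, ∑ k : Fin m, (2:ℝ) * (if i = k then Complex.normSq (v i) else 0)
          = 2 := by
        simp only [← Finset.mul_sum, Finset.sum_ite_eq, Finset.mem_univ, if_true]
        rw [hv]
        norm_num
      rw [e1, h2, h3]
      ring
    rw [hrep]
    have hL : ∑ i : Fin m, ∑ k : Fin m, q i k * Cm k i
        = ∑ p : Fin m × Fin m, q p.1 p.2 * Cm p.2 p.1 := by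
      rw [← Finset.univ_product_univ, Finset.sum_product]
    have hq2 : ∑ p : Fin m × Fin m, ‖q p.1 p.2‖ ^ 2 = (m : ℝ) - 1 := by
      simp_rw [Complex.sq_norm]
      rw [← Finset.univ_product_univ, Finset.sum_product]
      exact hqnorm
    have hc2 : ∑ p : Fin m × Fin m, ‖Cm p.2 p.1‖ ^ 2
        = ∑ i : Fin m, ∑ j : Fin m, Complex.normSq (Cm i j) := by
      simp_rw [Complex.sq_norm]
      rw [← Finset.univ_product_univ, Finset.sum_product]
      exact Finset.sum_comm
    have hcs := cs_abs (univ : Finset (Fin m × Fin m)) (fun p => q p.1 p.2) (fun p => Cm p.2 p.1)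
    rw [hq2, hc2] at hcs
    rw [hL, ← Complex.sq_norm]
    exact hcs
  -- Cauchy-Schwarz for μ itself
  have hμs : Complex.normSq μ ≤ ∑ j, Complex.normSq (s j) := by
    have hcs := cs_abs (univ : Finset (Fin m)) s v
    simp_rw [Complex.sq_norm] at hcs
    rw [hv, mul_one] at hcs
    rw [hμ]
    exact hcs
  have htrb' : Complex.normSq μ
      ≤ ((m : ℝ) - 1) * ((∑ i, ∑ j, Complex.normSq (B i j)) - ∑ j, Complex.normSq (s j)) := by
    have h0 : Complex.normSq (∑ i, Cm i i) = Complex.normSq μ := by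
      rw [htrC, Complex.normSq_neg]
    have h1 : (∑ i, ∑ j, Complex.normSq (Cm i j))
        = (∑ i, ∑ j, Complex.normSq (B i j)) - ∑ j, Complex.normSq (s j) := by
      rw [hF2]; ring
    rw [← h0, ← h1]
    exact htrb
  have hm' : (1 : ℝ) ≤ m := by exact_mod_cast hm
  nlinarith [hμs, htrb', Complex.normSq_nonneg μ]

lemma scalar_id (m : ℕ) (z : ℕ → ℂ) (g : ℕ → ℂ) (hg : ∑ k ∈ Finset.range (m+1), g k = 1)
    (x : ℂ) :
    ∑ k ∈ Finset.range (m+1), g k * ∏ j ∈ (Finset.range (m+1)).erase k, (x - z j)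
      = ∏ k ∈ Finset.range m, (x - z k)
        - ∑ k ∈ Finset.range m, (g k * (z m - z k)) * ∏ j ∈ (Finset.range m).erase k, (x - z j) := by
  have h1 : (Finset.range (m+1)).erase m = Finset.range m := by
    rw [Finset.range_add_one, Finset.erase_insert (by simp)]
  calc ∑ k ∈ Finset.range (m+1), g k * ∏ j ∈ (Finset.range (m+1)).erase k, (x - z j)
      = ∑ k ∈ Finset.range m, (g k * ∏ j ∈ Finset.range m, (x - z j)
          - (g k * (z m - z k)) * ∏ j ∈ (Finset.range m).erase k, (x - z j))
        + g m * ∏ j ∈ Finset.range m, (x - z j) := by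
        rw [Finset.sum_range_succ, h1]
        congr 1
        refine Finset.sum_congr rfl fun k hk => ?_
        have hkm : (m : ℕ) ≠ k := by have := Finset.mem_range.mp hk; omega
        rw [Finset.range_add_one, Finset.erase_insert_of_ne hkm,
          Finset.prod_insert (by simp)]
        have hps : (x - z k) * ∏ j ∈ (Finset.range m).erase k, (x - z j)
            = ∏ j ∈ Finset.range m, (x - z j) := Finset.mul_prod_erase (Finset.range m) (fun j => x - z j) hk
        linear_combination g k * hps
    _ = _ := by
        rw [Finset.sum_sub_distrib, ← Finset.sum_mul]
        have hgs : ∑ k ∈ Finset.range m, g k = 1 - g m := by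
          have := hg
          rw [Finset.sum_range_succ] at this
          linear_combination this
        rw [hgs]
        ring

theorem zeros_of_convex_combination_in_disk
    (n : ℕ) (hn : 2 ≤ n) (z : ℕ → ℂ) (γ : ℕ → ℝ)
    (hγ0 : ∀ k ∈ Finset.range n, 0 ≤ γ k)
    (hγ1 : ∑ k ∈ Finset.range n, γ k = 1)
    (w : ℂ)
    (hw : (∑ k ∈ Finset.range n, C ((γ k : ℂ)) *
        ∏ j ∈ (Finset.range n).erase k, (X - C (z j))).IsRoot w) :
    ‖w - (∑ j ∈ Finset.range n, ((1 - γ j : ℝ) : ℂ) * z j) / ((n : ℂ) - 1)‖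
      ≤ Real.sqrt (((n : ℝ) - 2) / ((n : ℝ) - 1)) *
        Real.sqrt
          ((∑ j ∈ Finset.range (n - 1),
              ‖((1 - γ j : ℝ) : ℂ) * z j + (γ j : ℝ) * z (n - 1)‖ ^ 2)
            + ((n : ℝ) - 2) *
              ∑ j ∈ Finset.range (n - 1), (γ j) ^ 2 * ‖z (n - 1) - z j‖ ^ 2
            - ‖∑ j ∈ Finset.range n, ((1 - γ j : ℝ) : ℂ) * z j‖ ^ 2
                / ((n : ℝ) - 1)) := by
  obtain ⟨m, rfl⟩ : ∃ m, n = m + 1 := ⟨n - 1, by omega⟩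
  have hm : 1 ≤ m := by omega
  have hmR : (1 : ℝ) ≤ (m : ℝ) := by exact_mod_cast hm
  have hmR0 : (0 : ℝ) < (m : ℝ) := by linarith
  have hmC : ((m : ℕ) : ℂ) ≠ 0 := Nat.cast_ne_zero.mpr (by omega)
  simp only [Nat.add_sub_cancel] at *
  -- the matrix
  set u : Fin m → ℂ := fun k => ((γ (k : ℕ) : ℝ) : ℂ) * (z m - z (k : ℕ)) with hu
  set M : Matrix (Fin m) (Fin m) ℂ :=
    Matrix.of (fun i j : Fin m => (if i = j then z (i : ℕ) else 0) + u i) with hM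
  -- sum of gammas over range m
  have hγs : ∑ k ∈ Finset.range m, ((γ k : ℝ) : ℂ) = 1 - ((γ m : ℝ) : ℂ) := by
    have h : ∑ k ∈ Finset.range m, γ k = 1 - γ m := by
      have h2 := hγ1
      rw [Finset.sum_range_succ] at h2
      linarith
    calc ∑ k ∈ Finset.range m, ((γ k : ℝ) : ℂ)
        = ((∑ k ∈ Finset.range m, γ k : ℝ) : ℂ) := by push_cast; rfl
      _ = _ := by rw [h]; push_cast; ring
  have hγ1C : ∑ k ∈ Finset.range (m+1), ((γ k : ℝ) : ℂ) = 1 := by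
    rw [Finset.sum_range_succ, hγs]; ring
  -- w is a root of the charpoly
  have hch : (M.charpoly).eval w = 0 := by
    rw [hM, charpoly_rank_one]
    simp only [eval_sub, eval_prod, eval_finset_sum, eval_mul, eval_X, eval_C]
    have hp : ∏ k : Fin m, (w - z (k : ℕ)) = ∏ k ∈ Finset.range m, (w - z k) :=
      Fin.prod_univ_eq_prod_range (fun k => w - z k) m
    have hsum : ∑ k : Fin m, u k * ∏ j ∈ univ.erase k, (w - z (j : ℕ))
        = ∑ k ∈ Finset.range m, (((γ k : ℝ) : ℂ) * (z m - z k))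
            * ∏ j ∈ (Finset.range m).erase k, (w - z j) := by
      rw [Finset.sum_congr rfl fun k _ => by
        rw [prod_erase_fin k (fun j => w - z j)]]
      exact Fin.sum_univ_eq_sum_range
        (fun k => (((γ k : ℝ) : ℂ) * (z m - z k)) * ∏ j ∈ (Finset.range m).erase k, (w - z j)) m
    rw [hp, hsum, ← scalar_id m z (fun k => ((γ k : ℝ) : ℂ)) hγ1C w]
    have hweval := hw
    simp only [Polynomial.IsRoot, eval_finset_sum, eval_mul, eval_C, eval_prod, eval_sub,
      eval_X] at hweval
    rw [← hweval]
  -- eigenvector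
  have hdet0 : (Matrix.of fun i j => (if i = j then w else 0) - M i j).det = 0 := by
    rw [← eval_charpoly', hch]
  obtain ⟨v, hv0, hveq⟩ := (Matrix.exists_mulVec_eq_zero_iff).mpr hdet0
  have heig : ∀ i, ∑ j, M i j * v j = w * v i := by
    intro i
    have h := congrFun hveq i
    simp only [Matrix.mulVec, dotProduct, Matrix.of_apply, Pi.zero_apply] at h
    have h2 : ∑ j, ((if i = j then w else 0) - M i j) * v j
        = w * v i - ∑ j, M i j * v j := by
      rw [Finset.sum_congr rfl fun j _ => sub_mul _ _ _, Finset.sum_sub_distrib]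
      congr 1
      simp [Finset.sum_ite_eq, ite_mul]
    rw [h2] at h
    linear_combination -h
  -- normalize the eigenvector
  set ν : ℝ := ∑ i, Complex.normSq (v i) with hν
  have hνpos : 0 < ν := by
    obtain ⟨i, hi⟩ := Function.ne_iff.mp hv0
    exact Finset.sum_pos' (fun j _ => Complex.normSq_nonneg _)
      ⟨i, Finset.mem_univ i, Complex.normSq_pos.mpr hi⟩
  set v' : Fin m → ℂ := fun i => ((Real.sqrt ν : ℝ) : ℂ)⁻¹ * v i with hv'
  have hsq : ((Real.sqrt ν : ℝ) : ℂ) ≠ 0 := by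
    simp only [ne_eq, Complex.ofReal_eq_zero]
    exact (Real.sqrt_pos.mpr hνpos).ne'
  have hv'1 : ∑ i, Complex.normSq (v' i) = 1 := by
    have : ∀ i, Complex.normSq (v' i) = ν⁻¹ * Complex.normSq (v i) := by
      intro i
      rw [hv']
      simp only [Complex.normSq_mul, Complex.normSq_inv, Complex.normSq_ofReal]
      rw [Real.mul_self_sqrt hνpos.le]
    rw [Finset.sum_congr rfl fun i _ => this i, ← Finset.mul_sum, ← hν,
      inv_mul_cancel₀ hνpos.ne']
  have heig' : ∀ i, ∑ j, M i j * v' j = w * v' i := by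
    intro i
    simp only [hv']
    have h1 : ∑ j, M i j * (((Real.sqrt ν : ℝ) : ℂ)⁻¹ * v j)
        = ((Real.sqrt ν : ℝ) : ℂ)⁻¹ * ∑ j, M i j * v j := by
      rw [Finset.mul_sum]
      exact Finset.sum_congr rfl fun j _ => by ring
    rw [h1, heig i]
    ring
  -- the centered matrix
  set t : ℂ := ∑ i, M i i with ht
  set c : ℂ := t / (m : ℂ) with hc
  set B : Matrix (Fin m) (Fin m) ℂ :=
    Matrix.of (fun i j : Fin m => M i j - if i = j then c else 0) with hB
  have htrB : ∑ i, B i i = 0 := by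
    simp only [hB, Matrix.of_apply, if_pos rfl, if_true]
    rw [Finset.sum_sub_distrib, ← ht, Finset.sum_const, Finset.card_univ, Fintype.card_fin,
      nsmul_eq_mul, hc]
    field_simp
    ring
  have hv'c : ∑ k, (starRingEnd ℂ) (v' k) * v' k = 1 := by
    have h1 : ∀ k, (starRingEnd ℂ) (v' k) * v' k = ((Complex.normSq (v' k) : ℝ) : ℂ) :=
      fun k => by rw [mul_comm, Complex.mul_conj]
    rw [Finset.sum_congr rfl fun k _ => h1 k, ← Complex.ofReal_sum, hv'1, Complex.ofReal_one]
  have hnum : ∑ j, (∑ k, (starRingEnd ℂ) (v' k) * B k j) * v' j = w - c := by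
    have h1 : ∀ j, (∑ k, (starRingEnd ℂ) (v' k) * B k j) * v' j
        = ∑ k, (starRingEnd ℂ) (v' k) * (B k j * v' j) := by
      intro j
      rw [Finset.sum_mul]
      exact Finset.sum_congr rfl fun k _ => by ring
    rw [Finset.sum_congr rfl fun j _ => h1 j, Finset.sum_comm]
    have h2 : ∀ k, ∑ j, (starRingEnd ℂ) (v' k) * (B k j * v' j)
        = (w - c) * ((starRingEnd ℂ) (v' k) * v' k) := by
      intro k
      rw [← Finset.mul_sum]
      have h3 : ∑ j, B k j * v' j = (w - c) * v' k := by
        simp only [hB, Matrix.of_apply]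
        rw [Finset.sum_congr rfl fun j _ => sub_mul _ _ _, Finset.sum_sub_distrib, heig' k]
        have h4 : ∑ j, (if k = j then c else 0) * v' j = c * v' k := by
          simp [Finset.sum_ite_eq, ite_mul]
        rw [h4]
        ring
      rw [h3]
      ring
    rw [Finset.sum_congr rfl fun k _ => h2 k, ← Finset.mul_sum, hv'c, mul_one]
  have htb := trace_zero_bound hm B v' hv'1 htrB
  rw [hnum] at htb
  -- Frobenius norm of M
  have hfrobM : ∑ i, ∑ j, Complex.normSq (M i j)
      = (∑ j ∈ Finset.range m,
          ‖((1 - γ j : ℝ) : ℂ) * z j + ((γ j : ℝ) : ℂ) * z m‖ ^ 2)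
        + ((m : ℝ) - 1) * ∑ j ∈ Finset.range m,
            (γ j) ^ 2 * ‖z m - z j‖ ^ 2 := by
    have hrow : ∀ i : Fin m, ∑ j, Complex.normSq (M i j)
        = Complex.normSq (z (i : ℕ) + u i) + ((m : ℝ) - 1) * Complex.normSq (u i) := by
      intro i
      have h1 : ∀ j : Fin m, Complex.normSq (M i j)
          = (if i = j then Complex.normSq (z (i : ℕ) + u i) - Complex.normSq (u i) else 0)
            + Complex.normSq (u i) := by
        intro j
        by_cases h : i = j
        · subst h
          simp [hM, Matrix.of_apply]
        · simp [hM, Matrix.of_apply, h]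
      rw [Finset.sum_congr rfl fun j _ => h1 j, Finset.sum_add_distrib, Finset.sum_ite_eq,
        if_pos (Finset.mem_univ i), Finset.sum_const, Finset.card_univ, Fintype.card_fin,
        nsmul_eq_mul]
      ring
    rw [Finset.sum_congr rfl fun i _ => hrow i, Finset.sum_add_distrib, ← Finset.mul_sum]
    congr 1
    · have h2 : ∀ i : Fin m, Complex.normSq (z (i : ℕ) + u i)
          = ‖((1 - γ (i : ℕ) : ℝ) : ℂ) * z (i : ℕ)
              + ((γ (i : ℕ) : ℝ) : ℂ) * z m‖ ^ 2 := by
        intro i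
        rw [Complex.sq_norm]
        congr 1
        push_cast
        ring
      rw [Finset.sum_congr rfl fun i _ => h2 i]
      exact Fin.sum_univ_eq_sum_range
        (fun j => ‖((1 - γ j : ℝ) : ℂ) * z j + ((γ j : ℝ) : ℂ) * z m‖ ^ 2) m
    · congr 1
      have h3 : ∀ i : Fin m, Complex.normSq (u i)
          = (γ (i : ℕ)) ^ 2 * ‖z m - z (i : ℕ)‖ ^ 2 := by
        intro i
        rw [hu]
        simp only [Complex.normSq_mul, Complex.normSq_ofReal, Complex.sq_norm]
        ring
      rw [Finset.sum_congr rfl fun i _ => h3 i]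
      exact Fin.sum_univ_eq_sum_range
        (fun j => (γ j) ^ 2 * ‖z m - z j‖ ^ 2) m
  -- Frobenius norm of B
  have hfrobB : ∑ i, ∑ j, Complex.normSq (B i j)
      = (∑ i, ∑ j, Complex.normSq (M i j)) - Complex.normSq t / m := by
    have h1 : ∀ i j : Fin m, Complex.normSq (B i j)
        = Complex.normSq (M i j)
          + (if i = j then Complex.normSq c - 2 * (M i i * (starRingEnd ℂ) c).re else 0) := by
      intro i j
      by_cases h : i = j
      · subst h
        simp only [hB, Matrix.of_apply, eq_self_iff_true, if_true]
        rw [Complex.normSq_sub]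
        ring
      · simp [hB, Matrix.of_apply, h]
    rw [Finset.sum_congr rfl fun i _ => (Finset.sum_congr rfl fun j _ => h1 i j)]
    simp_rw [Finset.sum_add_distrib, Finset.sum_ite_eq, Finset.mem_univ, if_true]
    have h2 : ∑ i, (M i i * (starRingEnd ℂ) c).re = (t * (starRingEnd ℂ) c).re := by
      rw [← Complex.re_sum, ← Finset.sum_mul, ← ht]
    have h3 : (t * (starRingEnd ℂ) c).re = Complex.normSq t / m := by
      have h3' : t * (starRingEnd ℂ) c = ((Complex.normSq t / m : ℝ) : ℂ) := by
        rw [hc, map_div₀, Complex.conj_natCast, mul_div_assoc', Complex.mul_conj]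
        push_cast
        ring
      rw [h3', Complex.ofReal_re]
    have h4 : ∑ i : Fin m, (Complex.normSq c - 2 * (M i i * (starRingEnd ℂ) c).re)
        = -(Complex.normSq t / m) := by
      rw [Finset.sum_sub_distrib, Finset.sum_const, Finset.card_univ, Fintype.card_fin,
        nsmul_eq_mul, ← Finset.mul_sum, h2, h3]
      have h5 : Complex.normSq c = Complex.normSq t / ((m : ℝ) * m) := by
        rw [hc, Complex.normSq_div, Complex.normSq_natCast]
      rw [h5]
      field_simp
      ring
    rw [h4]
    ring
  -- trace identity
  have htT : t = ∑ j ∈ Finset.range (m+1), ((1 - γ j : ℝ) : ℂ) * z j := by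
    have h0 : t = ∑ k ∈ Finset.range m, (z k + ((γ k : ℝ) : ℂ) * (z m - z k)) := by
      rw [ht]
      have h1 : ∀ i : Fin m, M i i = z (i : ℕ) + ((γ (i : ℕ) : ℝ) : ℂ) * (z m - z (i : ℕ)) := by
        intro i
        simp [hM, Matrix.of_apply, hu]
      rw [Finset.sum_congr rfl fun i _ => h1 i]
      exact Fin.sum_univ_eq_sum_range (fun k => z k + ((γ k : ℝ) : ℂ) * (z m - z k)) m
    calc t = ∑ k ∈ Finset.range m, (((1 - γ k : ℝ) : ℂ) * z k)
          + (∑ k ∈ Finset.range m, ((γ k : ℝ) : ℂ)) * z m := by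
          rw [h0, Finset.sum_mul, ← Finset.sum_add_distrib]
          refine Finset.sum_congr rfl fun k _ => ?_
          push_cast
          ring
      _ = _ := by
          rw [hγs, Finset.sum_range_succ]
          push_cast
          ring
  -- final assembly
  have e1 : (((m+1 : ℕ)) : ℝ) - 1 = (m : ℝ) := by push_cast; ring
  have e2 : (((m+1 : ℕ)) : ℝ) - 2 = (m : ℝ) - 1 := by push_cast; ring
  have e1C : (((m+1 : ℕ)) : ℂ) - 1 = ((m : ℕ) : ℂ) := by push_cast; ring
  rw [e1, e2, e1C]
  have hcenter : (∑ j ∈ Finset.range (m+1), ((1 - γ j : ℝ) : ℂ) * z j) / ((m : ℕ) : ℂ) = c := by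
    rw [hc, htT]
  rw [hcenter]
  have hE : (∑ j ∈ Finset.range m,
        ‖((1 - γ j : ℝ) : ℂ) * z j + ((γ j : ℝ) : ℂ) * z m‖ ^ 2)
      + ((m : ℝ) - 1) * ∑ j ∈ Finset.range m, (γ j) ^ 2 * ‖z m - z j‖ ^ 2
      - ‖∑ j ∈ Finset.range (m+1), ((1 - γ j : ℝ) : ℂ) * z j‖ ^ 2 / (m : ℝ)
      = ∑ i, ∑ j, Complex.normSq (B i j) := by
    rw [Complex.sq_norm, ← htT, hfrobB, hfrobM]
  rw [hE]
  have hEnn : (0 : ℝ) ≤ ∑ i, ∑ j, Complex.normSq (B i j) :=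
    Finset.sum_nonneg fun i _ => Finset.sum_nonneg fun j _ => Complex.normSq_nonneg _
  have hfrac : (0 : ℝ) ≤ ((m : ℝ) - 1) / m := div_nonneg (by linarith) hmR0.le
  have h2 : Complex.normSq (w - c)
      ≤ ((m : ℝ) - 1) / m * ∑ i, ∑ j, Complex.normSq (B i j) := by
    rw [div_mul_eq_mul_div]
    exact (le_div_iff₀ hmR0).mpr htb
  calc ‖w - c‖ = Real.sqrt (Complex.normSq (w - c)) := Complex.norm_def _
    _ ≤ Real.sqrt (((m : ℝ) - 1) / m * ∑ i, ∑ j, Complex.normSq (B i j)) :=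
        Real.sqrt_le_sqrt h2
    _ = Real.sqrt (((m : ℝ) - 1) / m) * Real.sqrt (∑ i, ∑ j, Complex.normSq (B i j)) :=
        Real.sqrt_mul hfrac _
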